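/- The density f(x) of the continuous gamma-Lomax distribution with parameters c, α, θ, with α > 1, has a unique critical point at x₀ = θ·(exp(c(α−1)/(c+1)) − 1): f is increasing on (0, x₀) and decreasing on (x₀, ∞), so x₀ is the unique mode. -/

import Mathlib

open MeasureTheory Real Filter Set

/-- Lower incomplete gamma function γ(a,t) = ∫₀ᵗ u^(a-1) e^(-u) du. -/
noncomputable def lowerGamma (a t : ℝ) : ℝ :=
  ∫ u in (0:ℝ)..t, u ^ (a - 1) * Real.exp (-u)

/-- pmf of the discrete gamma-Lomax distribution DGLD(c,a,θ). -/
noncomputable def dgldPMF (c a θ : ℝ) (x : ℕ) : ℝ :=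
  (1 / Real.Gamma a) *
    (lowerGamma a (c⁻¹ * Real.log (1 + ((x : ℝ) + 1) / θ)) -
     lowerGamma a (c⁻¹ * Real.log (1 + (x : ℝ) / θ)))

/-- cdf of DGLD(c,a,θ) at x ∈ ℕ. -/
noncomputable def dgldCDF (c a θ : ℝ) (x : ℕ) : ℝ :=
  lowerGamma a (c⁻¹ * Real.log (1 + ((x : ℝ) + 1) / θ)) / Real.Gamma a

/-- density of the continuous gamma-Lomax distribution. -/
noncomputable def glPDF (c a θ : ℝ) (x : ℝ) : ℝ :=
  (1 / ((x + θ) * Real.Gamma a * c ^ a)) * (1 + x / θ) ^ (-(1 / c)) *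
    (Real.log (1 + x / θ)) ^ (a - 1)

/-- cdf of the continuous gamma-Lomax distribution. -/
noncomputable def glCDF (c a θ : ℝ) (x : ℝ) : ℝ :=
  lowerGamma a (c⁻¹ * Real.log (1 + x / θ)) / Real.Gamma a

noncomputable def glG (c a : ℝ) (t : ℝ) : ℝ := t ^ (a-1) * Real.exp (-((1+1/c)*t))

lemma glG_hasDeriv {c a : ℝ} {t : ℝ} (ht : 0 < t) :
    HasDerivAt (glG c a)
      (Real.exp (-((1+1/c)*t)) * (t ^ (a-2) * ((a-1) - (1+1/c)*t))) t := by
  have h1 : HasDerivAt (fun t : ℝ => t ^ (a-1)) ((a-1) * t ^ (a-1-1)) t :=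
    Real.hasDerivAt_rpow_const (Or.inl ht.ne')
  have h2 : HasDerivAt (fun t : ℝ => Real.exp (-((1+1/c)*t)))
      (Real.exp (-((1+1/c)*t)) * (-(1+1/c))) t := by
    have h3 : HasDerivAt (fun t : ℝ => -((1+1/c)*t)) (-(1+1/c)) t := by
      simpa using ((hasDerivAt_id t).const_mul (1+1/c)).fun_neg
    exact h3.exp
  have h := h1.mul h2
  refine h.congr_deriv ?_
  have ht2 : a - 1 - 1 = a - 2 := by ring
  have ht1 : t ^ (a-1) = t ^ (a-2) * t := by
    rw [← Real.rpow_add_one ht.ne']; congr 1; ring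
  rw [ht2, ht1]; ring

lemma glG_contOn {c a : ℝ} (s : Set ℝ) (hs : ∀ t ∈ s, t ≠ 0) :
    ContinuousOn (glG c a) s := by
  apply ContinuousOn.mul
  · exact fun t ht => (Real.continuousAt_rpow_const t (a-1) (Or.inl (hs t ht))).continuousWithinAt
  · exact (Real.continuous_exp.comp (by continuity)).continuousOn

lemma lam_t0 {c a : ℝ} (hc : 0 < c) : (1+1/c) * (c*(a-1)/(c+1)) = a - 1 := by
  field_simp

lemma glG_mono {c a : ℝ} (hc : 0 < c) (ha : 1 < a) :
    StrictMonoOn (glG c a) (Set.Ioc 0 (c*(a-1)/(c+1))) := by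
  apply strictMonoOn_of_deriv_pos (convex_Ioc _ _)
  · exact glG_contOn _ (fun t ht => ht.1.ne')
  · intro t ht
    rw [interior_Ioc] at ht
    rw [(glG_hasDeriv ht.1).deriv]
    have hlam : (0:ℝ) < 1 + 1/c := by positivity
    have h2 : (1+1/c) * t < a - 1 := by
      calc (1+1/c)*t < (1+1/c)*(c*(a-1)/(c+1)) := by
            exact mul_lt_mul_of_pos_left ht.2 hlam
        _ = a - 1 := lam_t0 hc
    have h3 := Real.rpow_pos_of_pos ht.1 (a-2)
    have h4 := Real.exp_pos (-((1+1/c)*t))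
    exact mul_pos h4 (mul_pos h3 (by linarith))

lemma glG_anti {c a : ℝ} (hc : 0 < c) (ha : 1 < a) :
    StrictAntiOn (glG c a) (Set.Ici (c*(a-1)/(c+1))) := by
  have ht0 : 0 < c*(a-1)/(c+1) := by
    apply div_pos (mul_pos hc (by linarith)) (by linarith)
  apply strictAntiOn_of_deriv_neg (convex_Ici _)
  · exact glG_contOn _ (fun t ht => (lt_of_lt_of_le ht0 ht).ne')
  · intro t ht
    rw [interior_Ici] at ht
    have htp : 0 < t := lt_trans ht0 ht
    rw [(glG_hasDeriv htp).deriv]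
    have hlam : (0:ℝ) < 1 + 1/c := by positivity
    have h2 : a - 1 < (1+1/c) * t := by
      calc a - 1 = (1+1/c)*(c*(a-1)/(c+1)) := (lam_t0 hc).symm
        _ < (1+1/c)*t := mul_lt_mul_of_pos_left ht hlam
    have h3 := Real.rpow_pos_of_pos htp (a-2)
    have h4 := Real.exp_pos (-((1+1/c)*t))
    have : t ^ (a-2) * ((a-1) - (1+1/c)*t) < 0 :=
      mul_neg_of_pos_of_neg h3 (by linarith)
    exact mul_neg_of_pos_of_neg h4 this

lemma glPDF_eq {c a θ : ℝ} (hc : 0 < c) (hθ : 0 < θ) {x : ℝ} (hx : 0 < x) :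
    glPDF c a θ x = (1/(θ * Real.Gamma a * c ^ a)) * glG c a (Real.log (1 + x/θ)) := by
  have h1 : (0:ℝ) < 1 + x/θ := by positivity
  have hexp : Real.exp (Real.log (1+x/θ)) = 1 + x/θ := Real.exp_log h1
  unfold glPDF glG
  set L := Real.log (1+x/θ) with hL
  have hxθ : x + θ = θ * Real.exp L := by rw [hexp]; field_simp; ring
  have hpow : (1 + x/θ) ^ (-(1/c)) = Real.exp (-(L/c)) := by
    rw [Real.rpow_def_of_pos h1]; congr 1; rw [← hL]; ring
  have hsplit : Real.exp (-((1+1/c)*L)) = Real.exp (-L) * Real.exp (-(L/c)) := by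
    rw [← Real.exp_add]; congr 1; ring
  rw [hxθ, hpow, hsplit, Real.exp_neg]
  have he := Real.exp_pos L
  have hg : Real.Gamma a ≠ 0 ∨ True := Or.inr trivial
  field_simp
  rw [Real.exp_neg]
  ring
  field_simp

theorem gammaLomax_mode (c a θ : ℝ) (hc : 0 < c) (hθ : 0 < θ) (ha : 1 < a) :
    StrictMonoOn (glPDF c a θ) (Set.Ioc 0 (θ * (Real.exp (c * (a - 1) / (c + 1)) - 1))) ∧
    StrictAntiOn (glPDF c a θ) (Set.Ici (θ * (Real.exp (c * (a - 1) / (c + 1)) - 1))) := by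
  have ht0 : 0 < c * (a-1) / (c+1) := div_pos (mul_pos hc (by linarith)) (by linarith)
  set t₀ := c * (a-1) / (c+1) with ht₀def
  set x₀ := θ * (Real.exp t₀ - 1) with hx₀def
  have he1 : 1 < Real.exp t₀ := by
    calc (1:ℝ) = Real.exp 0 := Real.exp_zero.symm
      _ < Real.exp t₀ := Real.exp_lt_exp.mpr ht0
  have hx₀ : 0 < x₀ := mul_pos hθ (by linarith)
  have hK : 0 < 1/(θ * Real.Gamma a * c ^ a) := by
    have h1 := Real.Gamma_pos_of_pos (by linarith : (0:ℝ) < a)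
    have h2 := Real.rpow_pos_of_pos hc a
    positivity
  have hLx₀ : Real.log (1 + x₀/θ) = t₀ := by
    have h : 1 + x₀/θ = Real.exp t₀ := by
      rw [hx₀def]; field_simp; ring
    rw [h, Real.log_exp]
  have hLpos : ∀ x : ℝ, 0 < x → 0 < Real.log (1 + x/θ) := by
    intro x hx
    apply Real.log_pos
    have h : 0 < x/θ := by positivity
    linarith
  have hLmono : ∀ x y : ℝ, 0 < x → x < y → Real.log (1 + x/θ) < Real.log (1 + y/θ) := by
    intro x y hx hxy
    apply Real.log_lt_log (by positivity)
    have h : x/θ < y/θ := by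
      apply div_lt_div_of_pos_right hxy hθ
    linarith
  constructor
  · intro x hx y hy hxy
    rw [glPDF_eq hc hθ hx.1, glPDF_eq hc hθ hy.1]
    apply mul_lt_mul_of_pos_left _ hK
    apply glG_mono hc ha
    · refine ⟨hLpos x hx.1, ?_⟩
      rw [← ht₀def, ← hLx₀]
      rcases eq_or_lt_of_le hx.2 with h | h
      · rw [h]
      · exact le_of_lt (hLmono x x₀ hx.1 h)
    · refine ⟨hLpos y hy.1, ?_⟩
      rw [← ht₀def, ← hLx₀]
      rcases eq_or_lt_of_le hy.2 with h | h
      · rw [h]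
      · exact le_of_lt (hLmono y x₀ hy.1 h)
    · exact hLmono x y hx.1 hxy
  · intro x hx y hy hxy
    have hxp : 0 < x := lt_of_lt_of_le hx₀ hx
    have hyp : 0 < y := lt_of_lt_of_le hx₀ hy
    rw [glPDF_eq hc hθ hxp, glPDF_eq hc hθ hyp]
    apply mul_lt_mul_of_pos_left _ hK
    apply glG_anti hc ha
    · rw [Set.mem_Ici, ← ht₀def, ← hLx₀]
      rcases eq_or_lt_of_le (Set.mem_Ici.mp hx) with h | h
      · rw [h]
      · exact le_of_lt (hLmono x₀ x hx₀ h)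
    · rw [Set.mem_Ici, ← ht₀def, ← hLx₀]
      rcases eq_or_lt_of_le (Set.mem_Ici.mp hy) with h | h
      · rw [h]
      · exact le_of_lt (hLmono x₀ y hx₀ h)
    · exact hLmono x y hxp hxy
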